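/- arXiv:2109.13867 — 2 statements merged into one kernel-verified Lean document; each statement's English description precedes it below -/
import Mathlib

section
/- Let (X,c) be a Čech closure space. Consider the poset of all subsets of X as a category (with morphisms given by inclusions), in which pullbacks exist and are given by intersections. Then the assignment K sending each subset U ⊆ X to the collection K(U) of all i-covers of U (viewed as families of inclusion morphisms U_α ⟶ U) satisfies the axioms of a basis for a Grothendieck topology (a pretopology): (i) the singleton family {U ⟶ U} belongs to K(U); (ii) if {U_α}_{α ∈ A} ∈ K(U) and V ⊆ U, then the family of pullbacks {U_α ∩ V}_{α ∈ A} belongs to K(V); (iii) if {U_α}_{α ∈ A} ∈ K(U) and for each α the family {V_{βα}}_{β ∈ B_α} belongs to K(U_α), then the composite family {V_{βα} | α ∈ A, β ∈ B_α} belongs to K(U). -/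
/-- The interior operator of a Čech closure operator `c`: `i(A) := X \ c(X \ A)`. -/
def cInterior {X : Type*} (c : Set X → Set X) (A : Set X) : Set X := (c Aᶜ)ᶜ

/-- An `i`-cover of a subset `U` of a Čech closure space `(X, c)`, given as a
collection `𝒰` of subsets of `U` (i.e., a family of inclusion morphisms into `U`
in the poset category of subsets of `X`): the union of `𝒰` is `U` and the union
of the interiors of members of `𝒰` (computed in `X`) is the interior of `U`. -/
def IsICoverS {X : Type*} (c : Set X → Set X) (U : Set X) (𝒰 : Set (Set X)) : Prop :=
  (∀ W ∈ 𝒰, W ⊆ U) ∧ ⋃₀ 𝒰 = U ∧ (⋃ W ∈ 𝒰, cInterior c W) = cInterior c U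

lemma cInterior_inter {X : Type*} (c : Set X → Set X)
    (hc_union : ∀ A B : Set X, c (A ∪ B) = c A ∪ c B) (A B : Set X) :
    cInterior c (A ∩ B) = cInterior c A ∩ cInterior c B := by
  simp [cInterior, Set.compl_inter, hc_union, Set.compl_union]

/-- The assignment `K(U) := { 𝒰 | 𝒰 is an i-cover of U }` is a basis for a Grothendieck
topology (a pretopology) on the poset category of subsets of `X`, where pullbacks are
given by intersections:
(i) the singleton family `{U ⟶ U}` is in `K(U)`;
(ii) `K` is stable under pullback along any morphism `V ⟶ U` (i.e., `V ⊆ U`);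
(iii) `K` is stable under composition of covers. -/
theorem iCovers_pretopology {X : Type*} (c : Set X → Set X)
    (hc_empty : c ∅ = ∅)
    (hc_sub : ∀ A : Set X, A ⊆ c A)
    (hc_union : ∀ A B : Set X, c (A ∪ B) = c A ∪ c B) :
    (∀ U : Set X, IsICoverS c U {U}) ∧
    (∀ (U V : Set X) (𝒰 : Set (Set X)), IsICoverS c U 𝒰 → V ⊆ U →
      IsICoverS c V ((fun W => W ∩ V) '' 𝒰)) ∧
    (∀ (U : Set X) (𝒰 : Set (Set X)) (𝒱 : Set X → Set (Set X)),
      IsICoverS c U 𝒰 → (∀ W ∈ 𝒰, IsICoverS c W (𝒱 W)) →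
      IsICoverS c U (⋃ W ∈ 𝒰, 𝒱 W)) := by
  refine ⟨fun U => ⟨?_, ?_, ?_⟩, fun U V 𝒰 h hVU => ?_, fun U 𝒰 𝒱 h h' => ?_⟩
  · simp
  · simp
  · simp
  · obtain ⟨hsub, hun, hint⟩ := h
    refine ⟨?_, ?_, ?_⟩
    · rintro W ⟨W', _, rfl⟩
      exact Set.inter_subset_right
    · apply subset_antisymm
      · rintro x ⟨W, ⟨W', _, rfl⟩, hx⟩
        exact hx.2
      · intro x hx
        have : x ∈ ⋃₀ 𝒰 := hun ▸ hVU hx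
        obtain ⟨W, hW, hxW⟩ := this
        exact ⟨W ∩ V, ⟨W, hW, rfl⟩, hxW, hx⟩
    · apply subset_antisymm
      · intro x hx
        simp only [Set.mem_iUnion] at hx
        obtain ⟨W, ⟨W', _, rfl⟩, hx⟩ := hx
        rw [cInterior_inter c hc_union] at hx
        exact hx.2
      · intro x hx
        have hxi : x ∈ cInterior c U := by
          have : cInterior c V ⊆ cInterior c U := by
            simp only [cInterior]
            exact Set.compl_subset_compl.mpr (by
              have : Uᶜ ⊆ Vᶜ := Set.compl_subset_compl.mpr hVU
              calc c Uᶜ ⊆ c (Uᶜ ∪ Vᶜ) := by rw [hc_union]; exact Set.subset_union_left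
                _ = c Vᶜ := by rw [Set.union_eq_right.mpr this])
          exact this hx
        rw [← hint] at hxi
        simp only [Set.mem_iUnion] at hxi
        obtain ⟨W, hW, hxW⟩ := hxi
        simp only [Set.mem_iUnion]
        refine ⟨W ∩ V, ⟨W, hW, rfl⟩, ?_⟩
        rw [cInterior_inter c hc_union]
        exact ⟨hxW, hx⟩
  · obtain ⟨hsub, hun, hint⟩ := h
    refine ⟨?_, ?_, ?_⟩
    · intro W' hW'
      simp only [Set.mem_iUnion] at hW'
      obtain ⟨W, hW, hW'⟩ := hW'
      exact ((h' W hW).1 W' hW').trans (hsub W hW)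
    · apply subset_antisymm
      · rintro x ⟨W', hW', hx⟩
        simp only [Set.mem_iUnion] at hW'
        obtain ⟨W, hW, hW'⟩ := hW'
        exact hun ▸ ⟨W, hW, ((h' W hW).1 W' hW') hx⟩
      · intro x hx
        obtain ⟨W, hW, hxW⟩ := hun ▸ hx
        obtain ⟨W', hW', hx'⟩ := (h' W hW).2.1 ▸ hxW
        exact ⟨W', Set.mem_iUnion₂.mpr ⟨W, hW, hW'⟩, hx'⟩
    · apply subset_antisymm
      · intro x hx
        simp only [Set.mem_iUnion] at hx
        obtain ⟨W', ⟨W, hW, hW'⟩, hx⟩ := hx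
        rw [← hint]
        have := (h' W hW).2.2
        refine Set.mem_iUnion₂.mpr ⟨W, hW, ?_⟩
        rw [← this]
        exact Set.mem_iUnion₂.mpr ⟨W', hW', hx⟩
      · intro x hx
        rw [← hint] at hx
        obtain ⟨W, hW, hxW⟩ := Set.mem_iUnion₂.mp hx
        have := (h' W hW).2.2
        rw [← this] at hxW
        obtain ⟨W', hW', hx'⟩ := Set.mem_iUnion₂.mp hxW
        exact Set.mem_iUnion₂.mpr ⟨W', Set.mem_iUnion₂.mpr ⟨W, hW, hW'⟩, hx'⟩
end

section
/- Let n ≥ 3 and let G be the cycle graph on the vertex set ZMod n (where k is adjacent to k+1 and k−1 modulo n), with induced closure space (ZMod n, c_G). Then the family 𝒰 = { {k−1, k, k+1} | k ∈ ZMod n } is an interior cover of (ZMod n, c_G), and 𝒰 is maximal with respect to the refinement order: 𝒰 refines every interior cover 𝒱 of (ZMod n, c_G), i.e., for every k there exists V ∈ 𝒱 with {k−1, k, k+1} ⊆ V. -/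
/-- An interior cover of a Čech closure space `(X, c)` is a family `𝒰` of subsets of `X`
whose interiors cover `X`. -/
def IsInteriorCover {X : Type*} (c : Set X → Set X) (𝒰 : Set (Set X)) : Prop :=
  (⋃ U ∈ 𝒰, cInterior c U) = Set.univ

/-- The closure operator on the vertex set induced by a simple graph `G`:
`c_G(A) := A ∪ {w | ∃ v ∈ A, v ~ w}`. -/
def graphClosure {V : Type*} (G : SimpleGraph V) (A : Set V) : Set V :=
  A ∪ {w : V | ∃ v ∈ A, G.Adj v w}

/-- For the cycle graph `G` on `ZMod n` (`n ≥ 3`), where `k` is adjacent to `k+1` and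
`k-1` modulo `n`, the family `𝒰 = { {k-1, k, k+1} | k ∈ ZMod n }` is an interior cover
of the induced closure space `(ZMod n, c_G)`, and it is maximal in the refinement order:
`𝒰` refines every interior cover `𝒱` of `(ZMod n, c_G)`. -/
theorem cycle_interior_cover (n : ℕ) (hn : 3 ≤ n) (G : SimpleGraph (ZMod n))
    (hG : ∀ k l : ZMod n, G.Adj k l ↔ (l = k + 1 ∨ l = k - 1)) :
    IsInteriorCover (graphClosure G)
      {W : Set (ZMod n) | ∃ k : ZMod n, W = {k - 1, k, k + 1}} ∧
    (∀ 𝒱 : Set (Set (ZMod n)), IsInteriorCover (graphClosure G) 𝒱 →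
      ∀ k : ZMod n, ∃ V ∈ 𝒱, ({k - 1, k, k + 1} : Set (ZMod n)) ⊆ V) := by
  have mem_int : ∀ (U : Set (ZMod n)) (x : ZMod n),
      x ∈ cInterior (graphClosure G) U ↔ x ∈ U ∧ x - 1 ∈ U ∧ x + 1 ∈ U := by
    intro U x
    simp only [cInterior, graphClosure, Set.mem_compl_iff, Set.mem_union, Set.mem_setOf_eq,
      hG, not_or, not_exists, not_and, not_not]
    constructor
    · rintro ⟨h1, h2⟩
      refine ⟨h1, ?_, ?_⟩
      · by_contra h
        exact (h2 (x - 1) h).1 (by ring)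
      · by_contra h
        exact (h2 (x + 1) h).2 (by ring)
    · rintro ⟨h1, h2, h3⟩
      refine ⟨h1, fun v hv => ⟨?_, ?_⟩⟩
      · rintro rfl
        exact hv (by simpa using h2)
      · rintro rfl
        exact hv (by simpa using h3)
  constructor
  · apply Set.eq_univ_of_forall
    intro x
    simp only [Set.mem_iUnion, Set.mem_setOf_eq]
    exact ⟨{x - 1, x, x + 1}, ⟨x, rfl⟩, (mem_int _ x).mpr (by simp)⟩
  · intro 𝒱 h𝒱 k
    have hk : k ∈ ⋃ U ∈ 𝒱, cInterior (graphClosure G) U := by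
      rw [h𝒱]; exact Set.mem_univ k
    simp only [Set.mem_iUnion] at hk
    obtain ⟨V, hV, hkV⟩ := hk
    rw [mem_int] at hkV
    refine ⟨V, hV, ?_⟩
    simp only [Set.insert_subset_iff, Set.singleton_subset_iff]
    exact ⟨hkV.2.1, hkV.1, hkV.2.2⟩
end
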